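/- Let a > b ≥ 0 be integers and η₁,…,η_k positive integers with η₁+⋯+η_k = a, such that Σ_{i∈I} ηᵢ ≠ Σ_{j∈J} ηⱼ for every pair of disjoint nonempty subsets I, J ⊆ {1,…,k} (in particular the ηᵢ are pairwise distinct). Let Δ be the trapezoid with vertices (0,0), (0,a), (1,a), (1,b), equipped with β data: one step of lattice length 1 on the top edge, one step on the bottom edge (from (0,0) to (1,b)), β_left(m) = #{i : ηᵢ = m} on the left edge, and an arbitrary admissible sequence β_right on the right edge (so Σ_m m·β_right(m) = a − b). Let γ be the λ-increasing lattice path from (0,a) to (1,b) that goes down the left edge taking consecutive down steps of sizes η₁,…,η_k and then takes the single bottom-edge step from (0,0) to (1,b). Then mult₊(γ) ≠ 0 if and only if there is a subset E ⊆ {1,…,k} with Σ_{i∈E} ηᵢ = a − b and β_right(m) = #{i ∈ E : ηᵢ = m} for all m; and in that case mult₊(γ) = ∏_{i∉E} ηᵢ. -/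

import Mathlib

open Classical

noncomputable section

namespace TropPaths

/-- Lattice points of the plane. -/
abbrev Pt := ℤ × ℤ

/-- The order on `ℤ²` induced by `λ(x,y) = x - εy` for a small irrational `ε > 0`:
`p ≺ q` iff `p₁ < q₁`, or (`p₁ = q₁` and `p₂ > q₂`). -/
def lamLT (p q : Pt) : Prop := p.1 < q.1 ∨ (p.1 = q.1 ∧ q.2 < p.2)

/-- A lattice path, recorded as the list of its points, is `λ`-increasing. -/
def Increasing (γ : List Pt) : Prop := List.Chain' lamLT γ

/-- The determinant of two vectors in `ℤ²`. -/
def det (u v : Pt) : ℤ := u.1 * v.2 - u.2 * v.1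

/-- The `k`-th point of a path (junk value out of range). -/
def pt (γ : List Pt) (k : ℕ) : Pt := γ.getD k (0, 0)

/-- The `k`-th step vector of a path. -/
def stepAt (γ : List Pt) (k : ℕ) : Pt := pt γ (k + 1) - pt γ k

/-- The list of all step vectors of a path. -/
def steps (γ : List Pt) : List Pt := List.zipWith (fun a b => b - a) γ γ.tail

/-- The multiset of down steps `(0,-s)`, `s > 0`, of a path. -/
def downSteps (γ : List Pt) : Multiset Pt :=
  Multiset.filter (fun v => v.1 = 0 ∧ v.2 < 0) (steps γ : Multiset Pt)

/-- The multiset of up-right steps of a path. -/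
def upRightSteps (γ : List Pt) : Multiset Pt :=
  Multiset.filter (fun v => 0 < v.1 ∧ 0 < v.2) (steps γ : Multiset Pt)

/-- The path makes a turn of sign `s` at the (interior) index `k`; for left turns
`s = (0 < ·)`, for right turns `s = (· < 0)`. -/
def TurnAt (s : ℤ → Prop) (γ : List Pt) (k : ℕ) : Prop :=
  0 < k ∧ k + 1 < γ.length ∧ s (det (pt γ k - pt γ (k - 1)) (pt γ (k + 1) - pt γ k))

/-- `k` is the first turn of sign `s` of the path. -/
def FirstTurn (s : ℤ → Prop) (γ : List Pt) (k : ℕ) : Prop :=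
  TurnAt s γ k ∧ ∀ j, TurnAt s γ j → k ≤ j

/-- Twice the area of the triangle with vertices `γ(k-1), γ(k), γ(k+1)`. -/
def triArea2 (γ : List Pt) (k : ℕ) : ℕ :=
  (det (pt γ k - pt γ (k - 1)) (pt γ (k + 1) - pt γ k)).natAbs

/-- The path obtained by cutting the corner at index `k`, i.e. deleting the point `γ(k)`. -/
def cut (γ : List Pt) (k : ℕ) : List Pt := γ.eraseIdx k

/-- The path obtained by completing the parallelogram at index `k`, i.e. replacing
`γ(k)` by `γ(k-1) + γ(k+1) - γ(k)`. -/
def push (γ : List Pt) (k : ℕ) : List Pt :=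
  γ.set k (pt γ (k - 1) + pt γ (k + 1) - pt γ k)

/-- All points of the path lie in `Δ`. -/
def Inside (Δ : Set Pt) (γ : List Pt) : Prop := ∀ z ∈ γ, z ∈ Δ

/-- Mikhalkin's multiplicity recursion, as a functional relation: `MultRel Δ Init s γ m`
means that the recursion (performed always at the *first* turn of sign `s`) assigns the
multiplicity `m` to the path `γ`.  Here `Δ` is the set of lattice points of the polygon,
`Init` the set of initial paths (of multiplicity `1`), and `s` the turn sign
(`0 < ·` for left turns / `mult₊`, `· < 0` for right turns / `mult₋`). -/
inductive MultRel (Δ : Set Pt) (Init : List Pt → Prop) (s : ℤ → Prop) : List Pt → ℕ → Prop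
  | init {γ : List Pt} : Init γ → MultRel Δ Init s γ 1
  | noTurn {γ : List Pt} : ¬Init γ → (∀ k, ¬TurnAt s γ k) → MultRel Δ Init s γ 0
  | stepIn {γ : List Pt} {k m' m'' : ℕ} : ¬Init γ → FirstTurn s γ k →
      Inside Δ (push γ k) → MultRel Δ Init s (cut γ k) m' →
      MultRel Δ Init s (push γ k) m'' →
      MultRel Δ Init s γ (triArea2 γ k * m' + m'')
  | stepOut {γ : List Pt} {k m' : ℕ} : ¬Init γ → FirstTurn s γ k →
      ¬Inside Δ (push γ k) → MultRel Δ Init s (cut γ k) m' →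
      MultRel Δ Init s γ (triArea2 γ k * m')

/-- The multiplicity function determined by Mikhalkin's recursion. -/
def multOf (Δ : Set Pt) (Init : List Pt → Prop) (s : ℤ → Prop) (γ : List Pt) : ℕ :=
  if h : ∃ m, MultRel Δ Init s γ m then h.choose else 0

/-- `γ ≺ δ`: the path `δ` is obtained from `γ` by finitely many steps of the multiplicity
recursion (each step cuts the corner at the first turn of sign `s`, or completes the
parallelogram there). -/
inductive Reaches (Δ : Set Pt) (Init : List Pt → Prop) (s : ℤ → Prop) : List Pt → List Pt → Prop
  | refl (γ : List Pt) : Reaches Δ Init s γ γ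
  | cutStep {γ δ : List Pt} {k : ℕ} : ¬Init γ → FirstTurn s γ k →
      Reaches Δ Init s (cut γ k) δ → Reaches Δ Init s γ δ
  | pushStep {γ δ : List Pt} {k : ℕ} : ¬Init γ → FirstTurn s γ k →
      Inside Δ (push γ k) → Reaches Δ Init s (push γ k) δ → Reaches Δ Init s γ δ

/-- The lattice path starting at `p` with the given list of step vectors. -/
def pathFrom : Pt → List Pt → List Pt
  | p, [] => [p]
  | p, v :: vs => p :: pathFrom (p + v) vs

/-- Horizontal (rightward) steps of the given sizes. -/
def hSteps (l : List ℕ) : List Pt := l.map fun k => ((k : ℤ), 0)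

/-- Vertical downward steps of the given sizes. -/
def dSteps (l : List ℕ) : List Pt := l.map fun k => ((0 : ℤ), -(k : ℤ))

/-- A multiset of positive integers is a partition of `t`. -/
def IsPartition (m : Multiset ℕ) (t : ℕ) : Prop := (∀ k ∈ m, 0 < k) ∧ m.sum = t

/-! ## The rectangle `[0,c] × [0,d]` -/

/-- The lattice points of the rectangle with vertices `(0,0), (c,0), (0,d), (c,d)`. -/
def rect (c d : ℕ) : Set Pt := {z | 0 ≤ z.1 ∧ z.1 ≤ (c : ℤ) ∧ 0 ≤ z.2 ∧ z.2 ≤ (d : ℤ)}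

/-- `β₊`-initial paths of the rectangle: from `p = (0,d)` clockwise along the top edge with
step sizes the parts of `μ₂` and then down the right edge with step sizes the parts of `ν₂`. -/
def InitPlusRect (d : ℕ) (μ₂ ν₂ : Multiset ℕ) (γ : List Pt) : Prop :=
  ∃ s t : List ℕ, (s : Multiset ℕ) = μ₂ ∧ (t : Multiset ℕ) = ν₂ ∧
    γ = pathFrom (0, (d : ℤ)) (hSteps s ++ dSteps t)

/-- `β₋`-initial paths of the rectangle: from `p = (0,d)` counterclockwise down the left edge
with step sizes the parts of `ν₁` and then along the bottom edge with step sizes the parts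
of `μ₁`. -/
def InitMinusRect (d : ℕ) (μ₁ ν₁ : Multiset ℕ) (γ : List Pt) : Prop :=
  ∃ s t : List ℕ, (s : Multiset ℕ) = ν₁ ∧ (t : Multiset ℕ) = μ₁ ∧
    γ = pathFrom (0, (d : ℤ)) (dSteps s ++ hSteps t)

/-- `mult₊` for the rectangle with boundary data `(μ₁, μ₂, ν₁, ν₂)`. -/
def multPlusRect (c d : ℕ) (μ₂ ν₂ : Multiset ℕ) : List Pt → ℕ :=
  multOf (rect c d) (InitPlusRect d μ₂ ν₂) (fun x => 0 < x)

/-- `mult₋` for the rectangle with boundary data `(μ₁, μ₂, ν₁, ν₂)`. -/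
def multMinusRect (c d : ℕ) (μ₁ ν₁ : Multiset ℕ) : List Pt → ℕ :=
  multOf (rect c d) (InitMinusRect d μ₁ ν₁) (fun x => x < 0)

/-- `mult = mult₊ · mult₋` for the rectangle with boundary data `(μ₁, μ₂, ν₁, ν₂)`. -/
def multRect (c d : ℕ) (μ₁ μ₂ ν₁ ν₂ : Multiset ℕ) (γ : List Pt) : ℕ :=
  multPlusRect c d μ₂ ν₂ γ * multMinusRect c d μ₁ ν₁ γ

/-- A `λ`-increasing lattice path from `(0,d)` to `(c,0)` contained in the rectangle. -/
def IsPathRect (c d : ℕ) (γ : List Pt) : Prop :=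
  Increasing γ ∧ γ.head? = some (0, (d : ℤ)) ∧ γ.getLast? = some ((c : ℤ), 0) ∧
    Inside (rect c d) γ

/-- The genericity condition: all subset sums of the `xᵢ` are distinct. -/
def Generic {n : ℕ} (x : Fin n → ℕ) : Prop :=
  ∀ I J : Finset (Fin n), I ≠ J → ∑ i ∈ I, x i ≠ ∑ j ∈ J, x j

/-! ## Admissible pairs and the paths `γ(A,B)` -/

/-- An admissible pair `(A,B)`: pairwise disjoint sequences `A₀,…,A_{c-1}` in `{1,…,n}`
whose entries together partition `{1,…,n}`, and pairwise disjoint subsets `B₀,…,B_{c-1}`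
with union `{1,…,n}`, such that `B₀ ≠ ∅` and
`B_k ⊆ (A₀ ∪ ⋯ ∪ A_k) \ (B₀ ∪ ⋯ ∪ B_{k-1})` for all `k`. -/
def IsAdmissible {c n : ℕ} (A : Fin c → List (Fin n)) (B : Fin c → Finset (Fin n)) : Prop :=
  ((List.ofFn A).flatten : Multiset (Fin n)) = (Finset.univ : Finset (Fin n)).val ∧
  (∀ i : Fin n, ∃! k : Fin c, i ∈ B k) ∧
  (∀ k : Fin c, (k : ℕ) = 0 → (B k).Nonempty) ∧
  ∀ k : Fin c, B k ⊆
    (Finset.univ.filter fun i => ∃ j : Fin c, j ≤ k ∧ i ∈ A j) \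
      (Finset.univ.filter fun i => ∃ j : Fin c, j < k ∧ i ∈ B j)

/-- The steps of `γ(A,B)` in the column `x = k`: down steps of sizes `xᵢ`, `i ∈ A_k`, in
order, followed by the step `(1, Σ_{i ∈ B_k} xᵢ)` to the next column. -/
def colSteps {c n : ℕ} (x : Fin n → ℕ) (A : Fin c → List (Fin n))
    (B : Fin c → Finset (Fin n)) (k : Fin c) : List Pt :=
  ((A k).map fun i => ((0 : ℤ), -(x i : ℤ))) ++ [((1 : ℤ), ∑ i ∈ B k, (x i : ℤ))]

/-- The lattice path `γ(A,B)` associated to an admissible pair, from `(0,d)` to `(c,0)`,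
whose last step is the full right edge. -/
def gammaAB {c n : ℕ} (x : Fin n → ℕ) (A : Fin c → List (Fin n))
    (B : Fin c → Finset (Fin n)) : List Pt :=
  pathFrom (0, ((∑ i, x i : ℕ) : ℤ))
    ((List.ofFn (colSteps x A B)).flatten ++ [((0 : ℤ), -((∑ i, x i : ℕ) : ℤ))])

/-! ## The trapezoid of Lemma 4.? -/

/-- The lattice points of the trapezoid with vertices `(0,0), (0,a), (1,a), (1,b)`. -/
def trap (a b : ℕ) : Set Pt :=
  {z | 0 ≤ z.1 ∧ z.1 ≤ 1 ∧ (b : ℤ) * z.1 ≤ z.2 ∧ z.2 ≤ (a : ℤ)}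

/-- `β₊`-initial paths of the trapezoid: one step of lattice length 1 along the top edge,
then down the right edge with step sizes the parts of `βright`. -/
def InitPlusTrap (a : ℕ) (βright : Multiset ℕ) (γ : List Pt) : Prop :=
  ∃ t : List ℕ, (t : Multiset ℕ) = βright ∧
    γ = pathFrom (0, (a : ℤ)) (((1 : ℤ), (0 : ℤ)) :: dSteps t)

/-! ## Automorphisms of a partition -/

/-- `|Aut ν| = ∏_k m_k(ν)!` where `m_k(ν)` is the number of parts of `ν` equal to `k`. -/
def autCard (m : Multiset ℕ) : ℕ :=
  (m.dedup.map fun k => (m.count k).factorial).prod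

/-! ## Auxiliary lemmas -/

section Aux

lemma length_pathFrom (p : Pt) (vs : List Pt) : (pathFrom p vs).length = vs.length + 1 := by
  induction vs generalizing p with
  | nil => rfl
  | cons v vs ih => simp [pathFrom, ih]

lemma head?_pathFrom (p : Pt) (vs : List Pt) : (pathFrom p vs).head? = some p := by
  cases vs <;> rfl

lemma steps_pathFrom (p : Pt) (vs : List Pt) : steps (pathFrom p vs) = vs := by
  induction vs generalizing p with
  | nil => rfl
  | cons v vs ih =>
    have h := ih (p + v)
    cases hv : pathFrom (p + v) vs with
    | nil =>
      have := length_pathFrom (p + v) vs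
      rw [hv] at this
      simp at this
    | cons q l =>
      have hq : q = p + v := by
        have := head?_pathFrom (p + v) vs
        rw [hv] at this; simpa using this
      simp [pathFrom, hv, steps, hq] at *
      exact h

lemma pt_cons (q : Pt) (l : List Pt) (j : ℕ) : pt (q :: l) (j + 1) = pt l j := rfl

lemma pt_zero_pathFrom (p : Pt) (vs : List Pt) : pt (pathFrom p vs) 0 = p := by
  cases vs <;> rfl

lemma pt_pathFrom (vs : List Pt) (p : Pt) (j : ℕ) (hj : j ≤ vs.length) :
    pt (pathFrom p vs) j = p + (vs.take j).sum := by
  induction vs generalizing p j with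
  | nil => simp at hj; subst hj; simp [pathFrom, pt]
  | cons v vs ih =>
    cases j with
    | zero => simp [pt_zero_pathFrom]
    | succ j =>
      rw [pathFrom, pt_cons, ih (p + v) j (by simpa using hj)]
      simp [add_assoc]

lemma take_sum_succ (vs : List Pt) (j : ℕ) (hj : j < vs.length) :
    (vs.take (j + 1)).sum = (vs.take j).sum + vs.getD j 0 := by
  rw [List.sum_take_succ vs j hj, List.getD_eq_getElem?_getD,
    List.getElem?_eq_getElem hj]
  rfl

lemma stepdiff_pathFrom (vs : List Pt) (p : Pt) (j : ℕ) (hj : j < vs.length) :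
    pt (pathFrom p vs) (j + 1) - pt (pathFrom p vs) j = vs.getD j 0 := by
  rw [pt_pathFrom vs p (j + 1) (by omega), pt_pathFrom vs p j (by omega),
    take_sum_succ vs j hj]
  abel

lemma turnAt_pathFrom (s : ℤ → Prop) (p : Pt) (vs : List Pt) (j : ℕ) :
    TurnAt s (pathFrom p vs) j ↔
      0 < j ∧ j < vs.length ∧ s (det (vs.getD (j - 1) 0) (vs.getD j 0)) := by
  constructor
  · rintro ⟨h0, hlen, hs⟩
    rw [length_pathFrom] at hlen
    have hj : j < vs.length := by omega
    refine ⟨h0, hj, ?_⟩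
    have h1 : pt (pathFrom p vs) j - pt (pathFrom p vs) (j - 1) = vs.getD (j - 1) 0 := by
      have := stepdiff_pathFrom vs p (j - 1) (by omega)
      rwa [show j - 1 + 1 = j by omega] at this
    rwa [h1, stepdiff_pathFrom vs p j hj] at hs
  · rintro ⟨h0, hj, hs⟩
    refine ⟨h0, by rw [length_pathFrom]; omega, ?_⟩
    have h1 : pt (pathFrom p vs) j - pt (pathFrom p vs) (j - 1) = vs.getD (j - 1) 0 := by
      have := stepdiff_pathFrom vs p (j - 1) (by omega)
      rwa [show j - 1 + 1 = j by omega] at this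
    rwa [h1, stepdiff_pathFrom vs p j hj]

lemma triArea2_pathFrom (p : Pt) (vs : List Pt) (j : ℕ) (h0 : 0 < j) (hj : j < vs.length) :
    triArea2 (pathFrom p vs) j = (det (vs.getD (j - 1) 0) (vs.getD j 0)).natAbs := by
  unfold triArea2
  have h1 : pt (pathFrom p vs) j - pt (pathFrom p vs) (j - 1) = vs.getD (j - 1) 0 := by
    have := stepdiff_pathFrom vs p (j - 1) (by omega)
    rwa [show j - 1 + 1 = j by omega] at this
  rw [h1, stepdiff_pathFrom vs p j hj]

lemma mem_pathFrom {z : Pt} {p : Pt} {vs : List Pt} :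
    z ∈ pathFrom p vs ↔ ∃ j, j ≤ vs.length ∧ z = p + (vs.take j).sum := by
  induction vs generalizing p with
  | nil =>
    simp only [pathFrom, List.mem_singleton]
    constructor
    · rintro rfl; exact ⟨0, by simp⟩
    · rintro ⟨j, hj, rfl⟩; simp
  | cons v vs ih =>
    simp only [pathFrom, List.mem_cons, ih]
    constructor
    · rintro (rfl | ⟨j, hj, rfl⟩)
      · exact ⟨0, by simp⟩
      · exact ⟨j + 1, by simpa using hj, by simp [add_assoc]⟩
    · rintro ⟨j, hj, rfl⟩
      cases j with
      | zero => left; simp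
      | succ j => right; exact ⟨j, by simpa using hj, by simp [add_assoc]⟩

lemma cut_cons (q : Pt) (l : List Pt) (j : ℕ) : cut (q :: l) (j + 1) = q :: cut l j := rfl

lemma cut_pathFrom (us : List Pt) (p u w : Pt) (ws : List Pt) :
    cut (pathFrom p (us ++ u :: w :: ws)) (us.length + 1) =
      pathFrom p (us ++ (u + w) :: ws) := by
  induction us generalizing p with
  | nil =>
    show cut (p :: (p + u) :: pathFrom (p + u + w) ws) 1 = p :: pathFrom (p + (u + w)) ws
    rw [cut_cons]
    simp [cut, add_assoc]
  | cons x us ih =>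
    show cut (p :: pathFrom (p + x) (us ++ u :: w :: ws)) (us.length + 1 + 1)
      = p :: pathFrom (p + x) (us ++ (u + w) :: ws)
    rw [cut_cons, ih]

lemma push_cons (q : Pt) (l : List Pt) (j : ℕ) (hj : 1 ≤ j) :
    push (q :: l) (j + 1) = q :: push l j := by
  obtain ⟨i, rfl⟩ : ∃ i, j = i + 1 := ⟨j - 1, by omega⟩
  unfold push
  rfl

lemma push_pathFrom (us : List Pt) (p u w : Pt) (ws : List Pt) :
    push (pathFrom p (us ++ u :: w :: ws)) (us.length + 1) =
      pathFrom p (us ++ w :: u :: ws) := by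
  induction us generalizing p with
  | nil =>
    show push (p :: (p + u) :: pathFrom (p + u + w) ws) 1
      = p :: (p + w) :: pathFrom (p + w + u) ws
    have h2 : pt (p :: (p + u) :: pathFrom (p + u + w) ws) 2 = p + u + w := by
      rw [pt_cons, pt_cons, pt_zero_pathFrom]
    unfold push
    rw [h2]
    show p :: List.set _ 0 _ = _
    have hv : pt (p :: (p + u) :: pathFrom (p + u + w) ws) 0 + (p + u + w)
        - pt (p :: (p + u) :: pathFrom (p + u + w) ws) 1 = p + w := by
      show p + (p + u + w) - (p + u) = p + w; ring
    rw [hv]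
    have : p + u + w = p + w + u := by ring
    rw [this]
    rfl
  | cons x us ih =>
    show push (p :: pathFrom (p + x) (us ++ u :: w :: ws)) (us.length + 1 + 1)
      = p :: pathFrom (p + x) (us ++ w :: u :: ws)
    rw [push_cons _ _ _ (by omega), ih]

lemma firstTurn_unique {s : ℤ → Prop} {γ : List Pt} {k k' : ℕ}
    (h : FirstTurn s γ k) (h' : FirstTurn s γ k') : k = k' :=
  le_antisymm (h.2 _ h'.1) (h'.2 _ h.1)

lemma multRel_unique {Δ : Set Pt} {Init : List Pt → Prop} {s : ℤ → Prop} {γ : List Pt}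
    {m m' : ℕ} (h : MultRel Δ Init s γ m) (h' : MultRel Δ Init s γ m') : m = m' := by
  induction h generalizing m' with
  | init hI =>
    cases h' with
    | init _ => rfl
    | noTurn hnI _ => exact absurd hI hnI
    | stepIn hnI _ _ _ _ => exact absurd hI hnI
    | stepOut hnI _ _ _ => exact absurd hI hnI
  | noTurn hnI hnT =>
    cases h' with
    | init hI => exact absurd hI hnI
    | noTurn _ _ => rfl
    | stepIn _ hFT _ _ _ => exact absurd hFT.1 (hnT _)
    | stepOut _ hFT _ _ => exact absurd hFT.1 (hnT _)
  | stepIn hnI hFT hIn hcut hpush ihcut ihpush =>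
    cases h' with
    | init hI => exact absurd hI hnI
    | noTurn _ hnT => exact absurd hFT.1 (hnT _)
    | stepIn _ hFT' hIn' hcut' hpush' =>
      obtain rfl := firstTurn_unique hFT hFT'
      rw [ihcut hcut', ihpush hpush']
    | stepOut _ hFT' hIn' hcut' =>
      obtain rfl := firstTurn_unique hFT hFT'
      exact absurd hIn hIn'
  | stepOut hnI hFT hIn hcut ihcut =>
    cases h' with
    | init hI => exact absurd hI hnI
    | noTurn _ hnT => exact absurd hFT.1 (hnT _)
    | stepIn _ hFT' hIn' hcut' hpush' =>
      obtain rfl := firstTurn_unique hFT hFT'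
      exact absurd hIn' hIn
    | stepOut _ hFT' hIn' hcut' =>
      obtain rfl := firstTurn_unique hFT hFT'
      rw [ihcut hcut']

lemma multOf_eq {Δ : Set Pt} {Init : List Pt → Prop} {s : ℤ → Prop} {γ : List Pt} {m : ℕ}
    (h : MultRel Δ Init s γ m) : multOf Δ Init s γ = m := by
  have hex : ∃ m, MultRel Δ Init s γ m := ⟨m, h⟩
  rw [multOf, dif_pos hex]
  exact multRel_unique hex.choose_spec h

/-! ## dSteps lemmas -/

lemma dSteps_cons (d : ℕ) (l : List ℕ) :
    dSteps (d :: l) = ((0 : ℤ), -(d : ℤ)) :: dSteps l := rfl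

lemma dSteps_append (l l' : List ℕ) : dSteps (l ++ l') = dSteps l ++ dSteps l' := by
  induction l with
  | nil => rfl
  | cons d l ih => rw [List.cons_append, dSteps_cons, dSteps_cons, ih, List.cons_append]

lemma length_dSteps (l : List ℕ) : (dSteps l).length = l.length := by
  induction l with
  | nil => rfl
  | cons d l ih => rw [dSteps_cons, List.length_cons, List.length_cons, ih]

lemma sum_dSteps (l : List ℕ) : (dSteps l).sum = ((0 : ℤ), -((l.sum : ℕ) : ℤ)) := by
  induction l with
  | nil => simp [dSteps]; rfl
  | cons d l ih =>
    rw [dSteps_cons, List.sum_cons, ih, List.sum_cons]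
    rw [Prod.ext_iff]
    constructor
    · simp
    · simp; push_cast; ring

lemma dSteps_injective : Function.Injective dSteps := by
  intro l l' h
  induction l generalizing l' with
  | nil => cases l' with
    | nil => rfl
    | cons d l' => exact absurd (congrArg List.length h) (by simp [length_dSteps, dSteps_cons])
  | cons d l ih =>
    cases l' with
    | nil => exact absurd (congrArg List.length h) (by simp [length_dSteps, dSteps_cons])
    | cons d' l' =>
      rw [dSteps_cons, dSteps_cons, List.cons.injEq] at h
      have hd : d = d' := by
        have := h.1
        rw [Prod.ext_iff] at this
        omega
      rw [hd, ih h.2]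

lemma getD_dSteps (l : List ℕ) (j : ℕ) (hj : j < l.length) :
    (dSteps l).getD j 0 = ((0 : ℤ), -((l.getD j 0 : ℕ) : ℤ)) := by
  induction l generalizing j with
  | nil => simp at hj
  | cons d l ih =>
    cases j with
    | zero => rfl
    | succ j =>
      rw [dSteps_cons, List.getD_cons_succ, List.getD_cons_succ]
      exact ih j (by simpa using hj)

lemma take_dSteps (l : List ℕ) (j : ℕ) : (dSteps l).take j = dSteps (l.take j) := by
  induction l generalizing j with
  | nil => simp [dSteps]
  | cons d l ih =>
    cases j with
    | zero => rfl
    | succ j => rw [dSteps_cons, List.take_succ_cons, List.take_succ_cons, dSteps_cons, ih]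

lemma getD_append_length (l : List Pt) (x : Pt) (l' : List Pt) :
    (l ++ x :: l').getD l.length 0 = x := by
  rw [List.getD_append_right _ _ _ _ le_rfl]
  simp

end Aux

/-! ## The particular paths in the trapezoid -/

section TrapPaths

/-- Second coordinate of the unique rightward step. -/
def mvalP (a b : ℕ) (ds ts : List ℕ) : ℤ :=
  (b : ℤ) - (a : ℤ) + ((ds.sum : ℕ) : ℤ) + ((ts.sum : ℕ) : ℤ)

/-- Steps of the intermediate paths: down the left edge (`ds`), one rightward step,
down the right edge (`ts`). -/
def stepsP (a b : ℕ) (ds ts : List ℕ) : List Pt :=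
  dSteps ds ++ ((1 : ℤ), mvalP a b ds ts) :: dSteps ts

/-- The intermediate paths occurring in the recursion. -/
def PP (a b : ℕ) (ds ts : List ℕ) : List Pt :=
  pathFrom ((0 : ℤ), (a : ℤ)) (stepsP a b ds ts)

/-- The multiplicity recursion, solved: guarded version. -/
def fmul (T : Multiset ℕ) (c : ℕ) : List ℕ → List ℕ → ℕ
  | [], ts => if (ts : Multiset ℕ) = T then 1 else 0
  | d :: rest, ts =>
      d * fmul T c rest ts + if d + ts.sum ≤ c then fmul T c rest (d :: ts) else 0

/-- The multiplicity recursion, solved: unguarded version. -/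
def gmul (T : Multiset ℕ) : List ℕ → Multiset ℕ → ℕ
  | [], ts => if ts = T then 1 else 0
  | d :: rest, ts => d * gmul T rest ts + gmul T rest (d ::ₘ ts)

lemma length_stepsP (a b : ℕ) (ds ts : List ℕ) :
    (stepsP a b ds ts).length = ds.length + 1 + ts.length := by
  rw [stepsP, List.length_append, List.length_cons, length_dSteps, length_dSteps]
  omega

lemma sum_take_stepsP_left (a b : ℕ) (ds ts : List ℕ) (j : ℕ) (hj : j ≤ ds.length) :
    ((stepsP a b ds ts).take j).sum = ((0 : ℤ), -(((ds.take j).sum : ℕ) : ℤ)) := by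
  rw [stepsP, List.take_append_of_le_length (by rwa [length_dSteps]), take_dSteps,
    sum_dSteps]

lemma sum_take_stepsP_right (a b : ℕ) (ds ts : List ℕ) (i : ℕ) :
    ((stepsP a b ds ts).take (ds.length + 1 + i)).sum
      = ((1 : ℤ), (b : ℤ) - (a : ℤ) + ((ts.sum : ℕ) : ℤ) - (((ts.take i).sum : ℕ) : ℤ)) := by
  rw [stepsP, show ds.length + 1 + i = (dSteps ds).length + (i + 1) by rw [length_dSteps]; omega,
    List.take_append, List.take_of_length_le (Nat.le_add_right _ _), Nat.add_sub_cancel_left,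
    List.sum_append, sum_dSteps, List.take_succ_cons, List.sum_cons,
    take_dSteps, sum_dSteps]
  rw [Prod.ext_iff]
  constructor
  · simp
  · simp [mvalP]; ring

lemma nat_sum_take_le (l : List ℕ) (j : ℕ) : (l.take j).sum ≤ l.sum := by
  conv_rhs => rw [← List.take_append_drop j l]
  rw [List.sum_append]
  omega

lemma inside_PP (a b : ℕ) (ds ts : List ℕ) (h1 : ds.sum + ts.sum ≤ a)
    (h2 : b + ts.sum ≤ a) : Inside (trap a b) (PP a b ds ts) := by
  intro z hz
  rw [PP, mem_pathFrom] at hz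
  obtain ⟨j, hj, rfl⟩ := hz
  rw [length_stepsP] at hj
  by_cases hcase : j ≤ ds.length
  · rw [sum_take_stepsP_left a b ds ts j hcase]
    have hts : (ds.take j).sum ≤ ds.sum := nat_sum_take_le ds j
    refine ⟨by simp, by simp, ?_, ?_⟩ <;> simp [Prod.ext_iff, -Nat.cast_list_sum] <;> omega
  · obtain ⟨i, hi, rfl⟩ : ∃ i, i ≤ ts.length ∧ j = ds.length + 1 + i :=
      ⟨j - ds.length - 1, by omega, by omega⟩
    rw [sum_take_stepsP_right]
    have hts : (ts.take i).sum ≤ ts.sum := nat_sum_take_le ts i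
    refine ⟨by simp, by simp, ?_, ?_⟩ <;> simp [Prod.ext_iff, -Nat.cast_list_sum] <;> omega

lemma not_inside_PP (a b : ℕ) (ds ts : List ℕ) (h2 : a < b + ts.sum) :
    ¬ Inside (trap a b) (PP a b ds ts) := by
  intro h
  have hz : ((0 : ℤ), (a : ℤ)) +
      ((1 : ℤ), (b : ℤ) - (a : ℤ) + (ts.sum : ℤ) - ((ts.take 0).sum : ℤ)) ∈ PP a b ds ts := by
    rw [PP, mem_pathFrom]
    exact ⟨ds.length + 1 + 0, by rw [length_stepsP]; omega,
      by rw [sum_take_stepsP_right]⟩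
  have := (h _ hz).2.2.2
  simp [-Nat.cast_list_sum] at this
  omega

lemma steps_PP (a b : ℕ) (ds ts : List ℕ) : steps (PP a b ds ts) = stepsP a b ds ts :=
  steps_pathFrom _ _

lemma init_PP_nil_iff (a b : ℕ) (T : Multiset ℕ) (hba : b ≤ a) (hT : T.sum = a - b)
    (ts : List ℕ) : InitPlusTrap a T (PP a b [] ts) ↔ (ts : Multiset ℕ) = T := by
  have hsteps : stepsP a b [] ts = ((1 : ℤ), mvalP a b [] ts) :: dSteps ts := by
    rw [stepsP]; rfl
  constructor
  · rintro ⟨t, ht, heq⟩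
    have h := congrArg steps heq
    rw [steps_PP, steps_pathFrom, hsteps, List.cons.injEq] at h
    rw [← ht, ← dSteps_injective h.2]
  · intro h
    refine ⟨ts, h, ?_⟩
    rw [PP, hsteps]
    have hsum : ts.sum = a - b := by
      have := congrArg Multiset.sum h
      rwa [Multiset.sum_coe, hT] at this
    have : mvalP a b [] ts = 0 := by
      rw [mvalP, List.sum_nil, hsum]
      push_cast [Nat.cast_sub hba]
      ring
    rw [this]

lemma noTurn_PP_nil (a b : ℕ) (ts : List ℕ) (j : ℕ) :
    ¬ TurnAt (fun x => 0 < x) (PP a b [] ts) j := by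
  intro h
  rw [PP, turnAt_pathFrom] at h
  obtain ⟨h0, hlen, hs⟩ := h
  have hsteps : stepsP a b [] ts = ((1 : ℤ), mvalP a b [] ts) :: dSteps ts := by
    rw [stepsP]; rfl
  rw [hsteps] at hlen hs
  rw [List.length_cons, length_dSteps] at hlen
  obtain ⟨i, rfl⟩ : ∃ i, j = i + 1 := ⟨j - 1, by omega⟩
  have hgd : (((1 : ℤ), mvalP a b [] ts) :: dSteps ts).getD (i + 1) 0
      = ((0 : ℤ), -(ts.getD i 0 : ℤ)) := by
    rw [List.getD_cons_succ, getD_dSteps _ _ (by omega)]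
  cases i with
  | zero =>
    rw [hgd] at hs
    simp [det] at hs
    omega
  | succ i =>
    have hgd' : (((1 : ℤ), mvalP a b [] ts) :: dSteps ts).getD (i + 1) 0
        = ((0 : ℤ), -(ts.getD i 0 : ℤ)) := by
      rw [List.getD_cons_succ, getD_dSteps _ _ (by omega)]
    rw [show i + 1 + 1 - 1 = i + 1 by omega, hgd, hgd'] at hs
    simp [det] at hs

lemma multRel_PP (a b : ℕ) (T : Multiset ℕ) (hba : b < a) (hT : T.sum = a - b) :
    ∀ rs ts : List ℕ, (∀ x ∈ rs, 0 < x) → rs.sum + ts.sum ≤ a →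
      MultRel (trap a b) (InitPlusTrap a T) (fun x => 0 < x)
        (PP a b rs.reverse ts) (fmul T (a - b) rs ts) := by
  intro rs
  induction rs with
  | nil =>
    intro ts _ _
    by_cases h : (ts : Multiset ℕ) = T
    · have : fmul T (a - b) [] ts = 1 := by simp [fmul, h]
      rw [this]
      exact MultRel.init ((init_PP_nil_iff a b T hba.le hT ts).2 h)
    · have : fmul T (a - b) [] ts = 0 := by simp [fmul, h]
      rw [this]
      exact MultRel.noTurn (fun hI => h ((init_PP_nil_iff a b T hba.le hT ts).1 hI))
        (noTurn_PP_nil a b ts)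
  | cons d rest ih =>
    intro ts hpos hsum
    have hdpos : 0 < d := hpos d (by simp)
    have hsum' : d + rest.sum + ts.sum ≤ a := by
      rw [List.sum_cons] at hsum; omega
    set m : ℤ := mvalP a b ((d :: rest).reverse) ts with hm
    set us : List Pt := dSteps rest.reverse with hus
    have hkus : us.length = rest.length := by rw [hus, length_dSteps, List.length_reverse]
    set vs : List Pt := us ++ ((0 : ℤ), -(d : ℤ)) :: ((1 : ℤ), m) :: dSteps ts with hvs
    have hsteps : stepsP a b ((d :: rest).reverse) ts = vs := by
      rw [stepsP, show (d :: rest).reverse = rest.reverse ++ [d] by simp, dSteps_append,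
        hvs, hus]
      simp [dSteps_cons, dSteps]
      rw [hm, List.reverse_cons]
    have γeq : PP a b ((d :: rest).reverse) ts
        = pathFrom ((0 : ℤ), (a : ℤ)) vs := by rw [PP, hsteps]
    have hmsum : m = (b : ℤ) - (a : ℤ) + (d : ℤ) + (rest.sum : ℤ) + (ts.sum : ℤ) := by
      rw [hm, mvalP, List.sum_reverse, List.sum_cons]
      push_cast
      ring
    have hgd1 : vs.getD us.length 0 = ((0 : ℤ), -(d : ℤ)) := getD_append_length _ _ _
    have hgd2 : vs.getD (us.length + 1) 0 = ((1 : ℤ), m) := by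
      have h1 : vs = (us ++ [((0 : ℤ), -(d : ℤ))]) ++ ((1 : ℤ), m) :: dSteps ts := by
        rw [hvs]; simp
      have := getD_append_length (us ++ [((0 : ℤ), -(d : ℤ))]) ((1 : ℤ), m) (dSteps ts)
      rw [← h1] at this
      simpa using this
    have hlenvs : vs.length = us.length + 2 + ts.length := by
      rw [hvs]; simp [length_dSteps]; omega
    have hshape : ∀ i, i ≤ us.length → ∃ y, vs.getD i 0 = ((0 : ℤ), y) := by
      intro i hi
      rcases eq_or_lt_of_le hi with rfl | hlt
      · exact ⟨-(d : ℤ), hgd1⟩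
      · rw [hvs, List.getD_append _ _ _ _ hlt, hus,
          getD_dSteps _ _ (by rw [List.length_reverse]; omega)]
        exact ⟨_, rfl⟩
    have hturn : TurnAt (fun x => 0 < x) (PP a b ((d :: rest).reverse) ts)
        (us.length + 1) := by
      rw [γeq, turnAt_pathFrom]
      refine ⟨by omega, by omega, ?_⟩
      rw [show us.length + 1 - 1 = us.length by omega, hgd1, hgd2]
      show (0 : ℤ) < 0 * m - -(d : ℤ) * 1
      have : (0 : ℤ) < (d : ℤ) := by exact_mod_cast hdpos
      linarith
    have hfirst : FirstTurn (fun x => 0 < x) (PP a b ((d :: rest).reverse) ts)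
        (us.length + 1) := by
      refine ⟨hturn, fun j hj => ?_⟩
      by_contra hcon
      push_neg at hcon
      rw [γeq, turnAt_pathFrom] at hj
      obtain ⟨h0, _, hs⟩ := hj
      obtain ⟨y, hy⟩ := hshape (j - 1) (by omega)
      obtain ⟨y', hy'⟩ := hshape j (by omega)
      rw [hy, hy'] at hs
      simp [det] at hs
    have hni : ¬ InitPlusTrap a T (PP a b ((d :: rest).reverse) ts) := by
      rintro ⟨t, ht, heq⟩
      have h := congrArg steps heq
      rw [steps_PP, hsteps, steps_pathFrom] at h
      have h0 := congrArg (fun l => l.getD 0 0) h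
      obtain ⟨y, hy⟩ := hshape 0 (by omega)
      rw [hy] at h0
      rw [List.getD_cons_zero] at h0
      exact absurd (congrArg Prod.fst h0) (by simp)
    have hcutEq : cut (PP a b ((d :: rest).reverse) ts) (us.length + 1)
        = PP a b rest.reverse ts := by
      have hmval : ((0 : ℤ), -(d : ℤ)) + ((1 : ℤ), m)
          = ((1 : ℤ), mvalP a b rest.reverse ts) := by
        rw [Prod.mk_add_mk, Prod.mk.injEq]
        refine ⟨by norm_num, ?_⟩
        rw [mvalP, List.sum_reverse, hmsum]
        push_cast
        ring
      rw [γeq, hvs, cut_pathFrom, hmval, PP, stepsP, ← hus]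
    have hpushEq : push (PP a b ((d :: rest).reverse) ts) (us.length + 1)
        = PP a b rest.reverse (d :: ts) := by
      have hmval2 : mvalP a b rest.reverse (d :: ts) = m := by
        rw [mvalP, List.sum_reverse, List.sum_cons, hmsum]
        push_cast
        ring
      rw [γeq, hvs, push_pathFrom, PP, stepsP, ← hus, dSteps_cons, hmval2]
    have htri : triArea2 (PP a b ((d :: rest).reverse) ts) (us.length + 1) = d := by
      rw [γeq, triArea2_pathFrom _ _ _ (by omega) (by omega),
        show us.length + 1 - 1 = us.length by omega, hgd1, hgd2]
      show (0 * m - -(d : ℤ) * 1).natAbs = d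
      simp
    have ih1 : MultRel (trap a b) (InitPlusTrap a T) (fun x => 0 < x)
        (cut (PP a b ((d :: rest).reverse) ts) (us.length + 1)) (fmul T (a - b) rest ts) := by
      rw [hcutEq]
      exact ih ts (fun x hx => hpos x (by simp [hx])) (by omega)
    by_cases hg : d + ts.sum ≤ a - b
    · have hIn : Inside (trap a b) (push (PP a b ((d :: rest).reverse) ts) (us.length + 1)) := by
        rw [hpushEq]
        exact inside_PP a b rest.reverse (d :: ts)
          (by rw [List.sum_reverse, List.sum_cons]; omega)
          (by rw [List.sum_cons]; omega)
      have ih2 : MultRel (trap a b) (InitPlusTrap a T) (fun x => 0 < x)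
          (push (PP a b ((d :: rest).reverse) ts) (us.length + 1))
          (fmul T (a - b) rest (d :: ts)) := by
        rw [hpushEq]
        exact ih (d :: ts) (fun x hx => hpos x (by simp [hx])) (by simp; omega)
      have key := MultRel.stepIn hni hfirst hIn ih1 ih2
      rw [htri] at key
      have : fmul T (a - b) (d :: rest) ts
          = d * fmul T (a - b) rest ts + fmul T (a - b) rest (d :: ts) := by
        rw [fmul, if_pos hg]
      rw [this]
      exact key
    · have hIn : ¬ Inside (trap a b)
          (push (PP a b ((d :: rest).reverse) ts) (us.length + 1)) := by
        rw [hpushEq]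
        exact not_inside_PP a b rest.reverse (d :: ts) (by rw [List.sum_cons]; omega)
      have key := MultRel.stepOut hni hfirst hIn ih1
      rw [htri] at key
      have : fmul T (a - b) (d :: rest) ts = d * fmul T (a - b) rest ts := by
        rw [fmul, if_neg hg, add_zero]
      rw [this]
      exact key

lemma gmul_eq_zero (T : Multiset ℕ) (c : ℕ) (hT : T.sum = c) :
    ∀ rs : List ℕ, ∀ ts : Multiset ℕ, c < ts.sum → gmul T rs ts = 0 := by
  intro rs
  induction rs with
  | nil =>
    intro ts h
    rw [gmul, if_neg]
    rintro rfl
    omega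
  | cons d rest ih =>
    intro ts h
    rw [gmul, ih ts h, ih (d ::ₘ ts) (by rw [Multiset.sum_cons]; omega), mul_zero, add_zero]

lemma fmul_eq_gmul (T : Multiset ℕ) (c : ℕ) (hT : T.sum = c) :
    ∀ rs ts : List ℕ, fmul T c rs ts = gmul T rs (ts : Multiset ℕ) := by
  intro rs
  induction rs with
  | nil => intro ts; rfl
  | cons d rest ih =>
    intro ts
    rw [fmul, gmul]
    by_cases hg : d + ts.sum ≤ c
    · rw [if_pos hg, ih, ih (d :: ts)]
      rfl
    · rw [if_neg hg, ih,
        gmul_eq_zero T c hT rest (d ::ₘ (ts : Multiset ℕ))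
          (by rw [Multiset.sum_cons, Multiset.sum_coe]; omega)]

lemma gmul_formula {n : ℕ} (η : Fin n → ℕ) (T : Multiset ℕ) :
    ∀ l : List (Fin n), l.Nodup → ∀ ts : Multiset ℕ,
      gmul T (l.map η) ts = ∑ E ∈ l.toFinset.powerset,
        if Multiset.map η E.val + ts = T then ∏ i ∈ l.toFinset \ E, η i else 0 := by
  intro l
  induction l with
  | nil =>
    intro _ ts
    rw [List.map_nil, gmul, show ([] : List (Fin n)).toFinset = ∅ from rfl,
      Finset.powerset_empty, Finset.sum_singleton]
    simp
  | cons i l ih =>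
    intro hnd ts
    have hil : i ∉ l := (List.nodup_cons.1 hnd).1
    have hnd' : l.Nodup := (List.nodup_cons.1 hnd).2
    have hift : i ∉ l.toFinset := by simpa using hil
    rw [List.map_cons, gmul, ih hnd' ts, ih hnd' (η i ::ₘ ts),
      show (i :: l).toFinset = insert i l.toFinset from List.toFinset_cons,
      Finset.sum_powerset_insert hift]
    congr 1
    · rw [Finset.mul_sum]
      apply Finset.sum_congr rfl
      intro E hE
      rw [Finset.mem_powerset] at hE
      have hiE : i ∉ E := fun h => hift (hE h)
      rw [mul_ite, mul_zero]
      congr 1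
      rw [Finset.insert_sdiff_of_notMem _ hiE,
        Finset.prod_insert (fun h => hift (Finset.mem_sdiff.1 h).1)]
    · apply Finset.sum_congr rfl
      intro E hE
      rw [Finset.mem_powerset] at hE
      have hiE : i ∉ E := fun h => hift (hE h)
      have h1 : (insert i E).val = i ::ₘ E.val := Finset.insert_val_of_notMem hiE
      have h2 : insert i l.toFinset \ insert i E = l.toFinset \ E := by
        ext x
        simp only [Finset.mem_sdiff, Finset.mem_insert, not_or]
        constructor
        · rintro ⟨rfl | hx, hni, hnE⟩
          · exact absurd rfl hni
          · exact ⟨hx, hnE⟩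
        · rintro ⟨hx, hnE⟩
          exact ⟨Or.inr hx, fun h => hift (h ▸ hx), hnE⟩
      rw [h1, Multiset.map_cons, h2]
      congr 1
      rw [Multiset.cons_add, ← Multiset.add_cons]

end TrapPaths

/-- In the trapezoid with vertices `(0,0), (0,a), (1,a), (1,b)`, the path
`γ` going down the left edge with steps `η₁,…,η_k` and then along the bottom edge has
`mult₊(γ) ≠ 0` iff `β_right = χ_E` for some `E ⊆ {1,…,k}` with `Σ_{i∈E} ηᵢ = a - b`, and in
that case `mult₊(γ) = ∏_{i∉E} ηᵢ`. -/
theorem multPlus_trapezoid (a b : ℕ) (hba : b < a) (k : ℕ) (η : Fin k → ℕ)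
    (hpos : ∀ i, 0 < η i) (hsum : ∑ i, η i = a)
    (hgen : ∀ I J : Finset (Fin k), I.Nonempty → J.Nonempty → Disjoint I J →
      ∑ i ∈ I, η i ≠ ∑ j ∈ J, η j)
    (βright : Multiset ℕ) (hβpos : ∀ m ∈ βright, 0 < m) (hβsum : βright.sum = a - b) :
    (multOf (trap a b) (InitPlusTrap a βright) (fun x => 0 < x)
        (pathFrom (0, (a : ℤ)) (dSteps (List.ofFn η) ++ [((1 : ℤ), (b : ℤ))])) ≠ 0 ↔
      ∃ E : Finset (Fin k), βright = E.val.map η ∧ ∑ i ∈ E, η i = a - b) ∧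
    ∀ E : Finset (Fin k), βright = E.val.map η →
      multOf (trap a b) (InitPlusTrap a βright) (fun x => 0 < x)
        (pathFrom (0, (a : ℤ)) (dSteps (List.ofFn η) ++ [((1 : ℤ), (b : ℤ))]))
        = ∏ i ∈ Eᶜ, η i := by
  classical
  have hinj : Function.Injective η := by
    intro i j hij
    by_contra hne
    exact hgen {i} {j} (Finset.singleton_nonempty i) (Finset.singleton_nonempty j)
      (by simpa [Finset.disjoint_singleton] using hne) (by simpa using hij)
  have hEinj : ∀ E E' : Finset (Fin k), Multiset.map η E.val = Multiset.map η E'.val →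
      E = E' := fun E E' h => Finset.val_injective (Multiset.map_injective hinj h)
  -- identify the path with `PP`
  have hmval : mvalP a b (List.ofFn η) [] = (b : ℤ) := by
    rw [mvalP, List.sum_ofFn, hsum, List.sum_nil]
    push_cast
    ring
  have hPP : PP a b (((List.ofFn η).reverse).reverse) []
      = pathFrom (0, (a : ℤ)) (dSteps (List.ofFn η) ++ [((1 : ℤ), (b : ℤ))]) := by
    rw [List.reverse_reverse, PP, stepsP, hmval]
    rfl
  have hmr := multRel_PP a b βright hba hβsum ((List.ofFn η).reverse) []
    (by
      intro x hx
      rw [List.mem_reverse, List.mem_ofFn] at hx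
      obtain ⟨i, rfl⟩ := hx
      exact hpos i)
    (by rw [List.sum_reverse, List.sum_ofFn, hsum, List.sum_nil]; omega)
  rw [hPP] at hmr
  have hval : multOf (trap a b) (InitPlusTrap a βright) (fun x => 0 < x)
      (pathFrom (0, (a : ℤ)) (dSteps (List.ofFn η) ++ [((1 : ℤ), (b : ℤ))]))
      = fmul βright (a - b) ((List.ofFn η).reverse) [] := multOf_eq hmr
  -- rewrite the value as a sum over subsets
  have hofn : (List.ofFn η).reverse = ((List.finRange k).reverse).map η := by
    rw [List.ofFn_eq_map, List.map_reverse]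
  have hnodup : ((List.finRange k).reverse).Nodup :=
    List.nodup_reverse.2 (List.nodup_finRange k)
  have htofin : ((List.finRange k).reverse).toFinset = (Finset.univ : Finset (Fin k)) := by
    ext x
    simp
  have hsumform : multOf (trap a b) (InitPlusTrap a βright) (fun x => 0 < x)
      (pathFrom (0, (a : ℤ)) (dSteps (List.ofFn η) ++ [((1 : ℤ), (b : ℤ))]))
      = ∑ E ∈ (Finset.univ : Finset (Fin k)).powerset,
          if Multiset.map η E.val = βright then ∏ i ∈ Eᶜ, η i else 0 := by
    rw [hval, fmul_eq_gmul βright (a - b) hβsum, hofn,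
      gmul_formula η βright ((List.finRange k).reverse) hnodup, htofin]
    apply Finset.sum_congr rfl
    intro E _
    rw [show ((([] : List ℕ) : Multiset ℕ)) = 0 from rfl, add_zero,
      ← Finset.compl_eq_univ_sdiff]
  have hsumE : ∀ E : Finset (Fin k), Multiset.map η E.val = βright →
      ∑ i ∈ E, η i = a - b := by
    intro E hE
    have h1 : ∑ i ∈ E, η i = (Multiset.map η E.val).sum := rfl
    rw [h1, hE, hβsum]
  constructor
  · constructor
    · intro hne
      by_contra hcon
      push_neg at hcon
      apply hne
      rw [hsumform]
      apply Finset.sum_eq_zero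
      intro E _
      rw [if_neg]
      intro hc
      exact absurd (hsumE E hc) (hcon E hc.symm)
    · rintro ⟨E, hE, _⟩
      rw [hsumform]
      intro hzero
      rw [Finset.sum_eq_zero_iff] at hzero
      have := hzero E (Finset.mem_powerset.2 (Finset.subset_univ E))
      rw [if_pos hE.symm] at this
      exact absurd this (Finset.prod_pos (fun i _ => hpos i)).ne'
  · intro E hE
    rw [hsumform]
    rw [Finset.sum_eq_single_of_mem E (Finset.mem_powerset.2 (Finset.subset_univ E))
      (fun F _ hne => if_neg (fun hc => hne (hEinj F E (hc.trans hE))))]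
    rw [if_pos hE.symm]

end TropPaths
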